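/- The set {(A, B, D) ∈ ℝ³ : B² + 4BD + 2D² = 0 and A⁴ − 2A²(B² − 2D²) + 8B²D² = 1} is an unbounded subset of ℝ³. -/
import Mathlib


/-- The real points `{(A,B,D) : B² + 4BD + 2D² = 0, A⁴ − 2A²(B² − 2D²) + 8B²D² = 1}`
of the Hodge group form an unbounded subset of `ℝ³`. -/
theorem stmt_11 :
    ¬ Bornology.IsBounded {v : ℝ × ℝ × ℝ |
      v.2.1 ^ 2 + 4 * v.2.1 * v.2.2 + 2 * v.2.2 ^ 2 = 0 ∧
      v.1 ^ 4 - 2 * v.1 ^ 2 * (v.2.1 ^ 2 - 2 * v.2.2 ^ 2)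
        + 8 * v.2.1 ^ 2 * v.2.2 ^ 2 = 1} := by
  intro h
  rw [isBounded_iff_forall_norm_le] at h
  obtain ⟨C, hC⟩ := h
  set D : ℝ := |C| + 1 with hD
  set B : ℝ := -(2 + Real.sqrt 2) * D with hB
  set A : ℝ := Real.sqrt ((4 + 4 * Real.sqrt 2) * D ^ 2 + 1) with hA
  have s2 : Real.sqrt 2 ^ 2 = 2 := Real.sq_sqrt (by norm_num)
  have s2nn : (0:ℝ) ≤ Real.sqrt 2 := Real.sqrt_nonneg 2
  have hAsq : A ^ 2 = (4 + 4 * Real.sqrt 2) * D ^ 2 + 1 := by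
    rw [hA]
    apply Real.sq_sqrt
    positivity
  have hmem : (A, B, D) ∈ {v : ℝ × ℝ × ℝ |
      v.2.1 ^ 2 + 4 * v.2.1 * v.2.2 + 2 * v.2.2 ^ 2 = 0 ∧
      v.1 ^ 4 - 2 * v.1 ^ 2 * (v.2.1 ^ 2 - 2 * v.2.2 ^ 2)
        + 8 * v.2.1 ^ 2 * v.2.2 ^ 2 = 1} := by
    constructor
    · simp only [hB]
      nlinarith [s2]
    · simp only
      have h4 : A ^ 4 = ((4 + 4 * Real.sqrt 2) * D ^ 2 + 1) ^ 2 := by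
        rw [show A ^ 4 = (A ^ 2) ^ 2 by ring, hAsq]
      rw [h4, hAsq, hB]
      linear_combination (-(16 + 8 * Real.sqrt 2) * D ^ 4 - 2 * D ^ 2) * s2
  have hle := hC _ hmem
  have h1 : ‖D‖ ≤ ‖(B, D)‖ := norm_snd_le (B, D)
  have h2 : ‖(B, D)‖ ≤ ‖(A, B, D)‖ := norm_snd_le (A, B, D)
  have : |D| ≤ C := by
    calc |D| = ‖D‖ := rfl
    _ ≤ ‖(A, B, D)‖ := le_trans h1 h2
    _ ≤ C := hle
  have : D ≤ C := le_trans (le_abs_self D) this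
  have : C < D := by rw [hD]; have := le_abs_self C; linarith
  linarith
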